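/- Let S be a nonempty set, let p ∈ [1,∞), and let ℓ^{∞,p}(S) denote the Banach space of functions U : S × S → ℂ with norm ‖U‖ = sup_{s∈S} (Σ_{t∈S} |U(s,t)|^p)^{1/p} < ∞. Let R : ℓ^{∞,p}(S) → ℓ^p(S) be a bounded linear operator, let U ∈ ℓ^{∞,p}(S), and for each s ∈ S let U_s ∈ ℓ^{∞,p}(S) satisfy |U_s(r,t)| ≤ |δ_s(t) U(r,t)| for all r,t ∈ S (that is, U_s(r,t) = 0 whenever t ≠ s, and |U_s(r,s)| ≤ |U(r,s)|). Then (Σ_{s∈S} |R(U_s)(s)|^p)^{1/p} ≤ ‖U‖ ‖R‖. -/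

import Mathlib

open scoped ENNReal

namespace DiagAux

def sgn (b : Bool) : ℂ := if b then 1 else -1

lemma sgn_mul_self (b : Bool) : sgn b * sgn b = 1 := by cases b <;> simp [sgn]

lemma norm_sgn (b : Bool) : ‖sgn b‖ = 1 := by cases b <;> simp [sgn]

lemma sgn_not (b : Bool) : sgn (!b) = - sgn b := by cases b <;> simp [sgn]

lemma sgn_orth {ι : Type*} [Fintype ι] [DecidableEq ι] (i j : ι) :
    ∑ ε : ι → Bool, sgn (ε i) * sgn (ε j)
      = if i = j then ((2 : ℂ) ^ Fintype.card ι) else 0 := by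
  by_cases h : i = j
  · subst h
    rw [if_pos rfl, Finset.sum_congr rfl (fun ε _ => sgn_mul_self (ε i))]
    simp [Finset.card_univ]
  · rw [if_neg h]
    have hinv : Function.Involutive
        (fun ε : ι → Bool => Function.update ε i (!(ε i))) := by
      intro ε; funext x
      by_cases hx : x = i
      · subst hx; simp
      · simp [Function.update_of_ne hx]
    have hcomp := Equiv.sum_comp (hinv.toPerm _) (fun ε => sgn (ε i) * sgn (ε j))
    have hneg : ∀ ε : ι → Bool, sgn ((hinv.toPerm _) ε i) * sgn ((hinv.toPerm _) ε j)
        = -(sgn (ε i) * sgn (ε j)) := by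
      intro ε
      have h1 : (hinv.toPerm _) ε i = !(ε i) := by
        rw [Function.Involutive.coe_toPerm]; simp
      have h2 : (hinv.toPerm _) ε j = ε j := by
        rw [Function.Involutive.coe_toPerm]
        exact Function.update_of_ne (Ne.symm h) _ _
      rw [h1, h2, sgn_not, neg_mul]
    rw [Finset.sum_congr rfl (fun ε _ => hneg ε), Finset.sum_neg_distrib] at hcomp
    exact neg_eq_self.mp hcomp

end DiagAux

open DiagAux

set_option maxHeartbeats 1000000

/-- let `S` be a nonempty set and `p ∈ [1,∞)`. Regard
`ℓ^{∞,p}(S) = {U : S×S → ℂ : sup_s (Σ_t |U(s,t)|^p)^{1/p} < ∞}` as the space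
`lp (fun _ : S => ℓ^p(S)) ∞`. Let `R : ℓ^{∞,p}(S) → ℓ^p(S)` be a bounded linear
operator, `U ∈ ℓ^{∞,p}(S)`, and for each `s ∈ S` let `Uₛ ∈ ℓ^{∞,p}(S)` satisfy
`|Uₛ(r,t)| ≤ |δₛ(t) U(r,t)|` for all `r,t`. Then
`(Σ_s |R(Uₛ)(s)|^p)^{1/p} ≤ ‖U‖ ‖R‖`. -/
theorem diagonal_estimate_discrete
    (S : Type*) [Nonempty S] [DecidableEq S] (p : ℝ) (hp : 1 ≤ p) [Fact (1 ≤ ENNReal.ofReal p)]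
    (R : lp (fun _ : S => lp (fun _ : S => ℂ) (ENNReal.ofReal p)) ∞
          →L[ℂ] lp (fun _ : S => ℂ) (ENNReal.ofReal p))
    (U : lp (fun _ : S => lp (fun _ : S => ℂ) (ENNReal.ofReal p)) ∞)
    (Us : S → lp (fun _ : S => lp (fun _ : S => ℂ) (ENNReal.ofReal p)) ∞)
    (hUs : ∀ s r t : S, ‖(Us s : ∀ _ : S, lp (fun _ : S => ℂ) (ENNReal.ofReal p)) r t‖
      ≤ if t = s then ‖(U : ∀ _ : S, lp (fun _ : S => ℂ) (ENNReal.ofReal p)) r t‖ else 0) :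
    (∑' s : S, (‖(R (Us s) : ∀ _ : S, ℂ) s‖₊ : ℝ≥0∞) ^ p) ^ (1 / p)
      ≤ ENNReal.ofReal (‖U‖ * ‖R‖) := by
  classical
  have hp0 : 0 < p := lt_of_lt_of_le one_pos hp
  set q : ℝ≥0∞ := ENNReal.ofReal p with hqdef
  have hqt : q.toReal = p := ENNReal.toReal_ofReal hp0.le
  have hqt0 : 0 < q.toReal := by rw [hqt]; exact hp0
  set a : S → ℂ := fun s => (R (Us s) : ∀ _ : S, ℂ) s with ha
  set C : ℝ := ‖U‖ * ‖R‖ with hCdef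
  have hC0 : 0 ≤ C := mul_nonneg (norm_nonneg _) (norm_nonneg _)
  have hzero : ∀ s r t, t ≠ s →
      (Us s : ∀ _ : S, lp (fun _ : S => ℂ) q) r t = 0 := by
    intro s r t ht
    have h := hUs s r t
    rw [if_neg ht] at h
    exact norm_le_zero_iff.mp h
  have hdiagle : ∀ s r, ‖(Us s : ∀ _ : S, lp (fun _ : S => ℂ) q) r s‖
      ≤ ‖(U : ∀ _ : S, lp (fun _ : S => ℂ) q) r s‖ := by
    intro s r
    have h := hUs s r s
    rwa [if_pos rfl] at h
  -- the key finite estimate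
  have key : ∀ F : Finset S, ∑ s ∈ F, ‖a s‖ ^ p ≤ C ^ p := by
    intro F
    set W : ((↥F → Bool)) → lp (fun _ : S => lp (fun _ : S => ℂ) q) ∞ :=
      fun ε => ∑ s : ↥F, sgn (ε s) • Us ↑s with hW
    have hWapp : ∀ (ε : ↥F → Bool) (r t : S),
        (W ε : ∀ _ : S, lp (fun _ : S => ℂ) q) r t
        = ∑ s : ↥F, sgn (ε s) * (Us ↑s : ∀ _ : S, lp (fun _ : S => ℂ) q) r t := by
      intro ε r t
      rw [hW]
      rw [lp.coeFn_sum, Finset.sum_apply, lp.coeFn_sum, Finset.sum_apply]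
      refine Finset.sum_congr rfl fun s _ => ?_
      rw [lp.coeFn_smul, Pi.smul_apply, lp.coeFn_smul, Pi.smul_apply, smul_eq_mul]
    have hWle : ∀ (ε : ↥F → Bool) (r t : S),
        ‖(W ε : ∀ _ : S, lp (fun _ : S => ℂ) q) r t‖
          ≤ ‖(U : ∀ _ : S, lp (fun _ : S => ℂ) q) r t‖ := by
      intro ε r t
      rw [hWapp]
      by_cases ht : t ∈ F
      · rw [Finset.sum_eq_single (⟨t, ht⟩ : ↥F)
          (fun s _ hs => by
            rw [hzero ↑s r t (fun h => hs (Subtype.ext h.symm)), mul_zero])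
          (fun h => absurd (Finset.mem_univ _) h)]
        rw [norm_mul, norm_sgn, one_mul]
        exact hdiagle t r
      · rw [Finset.sum_eq_zero (fun s _ => by
          rw [hzero ↑s r t (fun h => ht (h ▸ s.2)), mul_zero])]
        simp
    have hWnorm : ∀ ε, ‖W ε‖ ≤ ‖U‖ := by
      intro ε
      refine lp.norm_le_of_forall_le (norm_nonneg U) fun r => ?_
      refine lp.norm_le_of_forall_sum_le hqt0 (norm_nonneg U) fun G => ?_
      calc ∑ t ∈ G, ‖(W ε : ∀ _ : S, lp (fun _ : S => ℂ) q) r t‖ ^ q.toReal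
          ≤ ∑ t ∈ G, ‖(U : ∀ _ : S, lp (fun _ : S => ℂ) q) r t‖ ^ q.toReal :=
            Finset.sum_le_sum fun t _ =>
              Real.rpow_le_rpow (norm_nonneg _) (hWle ε r t) hqt0.le
        _ ≤ ‖(U : ∀ _ : S, lp (fun _ : S => ℂ) q) r‖ ^ q.toReal :=
            lp.sum_rpow_le_norm_rpow hqt0 _ G
        _ ≤ ‖U‖ ^ q.toReal :=
            Real.rpow_le_rpow (norm_nonneg _)
              (lp.norm_apply_le_norm ENNReal.top_ne_zero U r) hqt0.le
    have hRW : ∀ ε, ‖R (W ε)‖ ≤ C := by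
      intro ε
      calc ‖R (W ε)‖ ≤ ‖R‖ * ‖W ε‖ := R.le_opNorm _
        _ ≤ ‖R‖ * ‖U‖ := mul_le_mul_of_nonneg_left (hWnorm ε) (norm_nonneg R)
        _ = C := mul_comm _ _
    set g : (↥F → Bool) → S → ℂ := fun ε s =>
      if h : s ∈ F then sgn (ε ⟨s, h⟩) * (R (W ε) : ∀ _ : S, ℂ) s else 0 with hg
    set X : (↥F → Bool) → lp (fun _ : S => ℂ) q :=
      fun ε => ∑ s ∈ F, lp.single q s (g ε s) with hX
    have hXnorm : ∀ ε, ‖X ε‖ ≤ C := by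
      intro ε
      have h1 : ‖X ε‖ ^ q.toReal = ∑ s ∈ F, ‖g ε s‖ ^ q.toReal :=
        lp.norm_sum_single hqt0 (g ε) F
      have h2 : ∑ s ∈ F, ‖g ε s‖ ^ q.toReal ≤ C ^ q.toReal := by
        calc ∑ s ∈ F, ‖g ε s‖ ^ q.toReal
            ≤ ∑ s ∈ F, ‖(R (W ε) : ∀ _ : S, ℂ) s‖ ^ q.toReal := by
              refine Finset.sum_le_sum fun s hs => ?_
              refine Real.rpow_le_rpow (norm_nonneg _) ?_ hqt0.le
              rw [hg]; simp only [dif_pos hs]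
              rw [norm_mul, norm_sgn, one_mul]
          _ ≤ ‖R (W ε)‖ ^ q.toReal := lp.sum_rpow_le_norm_rpow hqt0 _ F
          _ ≤ C ^ q.toReal := Real.rpow_le_rpow (norm_nonneg _) (hRW ε) hqt0.le
      have := h1 ▸ h2
      exact (Real.rpow_le_rpow_iff (norm_nonneg _) hC0 hqt0).mp this
    -- the averaging identity
    set aF : lp (fun _ : S => ℂ) q := ∑ s ∈ F, lp.single q s (a s) with haF
    have hsum : ∑ ε : ↥F → Bool, X ε = ((2 : ℂ) ^ F.card) • aF := by
      refine lp.ext (funext fun t => ?_)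
      rw [lp.coeFn_sum, Finset.sum_apply, lp.coeFn_smul, Pi.smul_apply, smul_eq_mul]
      have hXapp : ∀ ε, (X ε : ∀ _ : S, ℂ) t = if t ∈ F then g ε t else 0 := by
        intro ε
        rw [hX, lp.coeFn_sum, Finset.sum_apply]
        simp only [lp.single_apply, eq_rec_constant]
        simp only [Pi.single_apply, Finset.sum_ite_eq, Finset.sum_ite_eq']
      have haFapp : (aF : ∀ _ : S, ℂ) t = if t ∈ F then a t else 0 := by
        rw [haF, lp.coeFn_sum, Finset.sum_apply]
        simp only [lp.single_apply, eq_rec_constant]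
        simp only [Pi.single_apply, Finset.sum_ite_eq, Finset.sum_ite_eq']
      rw [Finset.sum_congr rfl (fun ε _ => hXapp ε), haFapp]
      by_cases ht : t ∈ F
      · simp only [if_pos ht]
        have hRWapp : ∀ ε : ↥F → Bool, (R (W ε) : ∀ _ : S, ℂ) t
            = ∑ s : ↥F, sgn (ε s) * (R (Us ↑s) : ∀ _ : S, ℂ) t := by
          intro ε
          have : R (W ε) = ∑ s : ↥F, sgn (ε s) • R (Us ↑s) := by
            rw [hW, map_sum]
            exact Finset.sum_congr rfl fun s _ => map_smul R _ _
          rw [this, lp.coeFn_sum, Finset.sum_apply]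
          exact Finset.sum_congr rfl fun s _ => by
            rw [lp.coeFn_smul, Pi.smul_apply, smul_eq_mul]
        calc ∑ ε : ↥F → Bool, g ε t
            = ∑ ε : ↥F → Bool, ∑ s : ↥F,
                sgn (ε ⟨t, ht⟩) * sgn (ε s) * (R (Us ↑s) : ∀ _ : S, ℂ) t := by
              refine Finset.sum_congr rfl fun ε _ => ?_
              rw [hg]; simp only [dif_pos ht]
              rw [hRWapp, Finset.mul_sum]
              exact Finset.sum_congr rfl fun s _ => (mul_assoc _ _ _).symm
          _ = ∑ s : ↥F, (∑ ε : ↥F → Bool, sgn (ε ⟨t, ht⟩) * sgn (ε s))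
                * (R (Us ↑s) : ∀ _ : S, ℂ) t := by
              rw [Finset.sum_comm]
              exact Finset.sum_congr rfl fun s _ => (Finset.sum_mul _ _ _).symm
          _ = ∑ s : ↥F, (if (⟨t, ht⟩ : ↥F) = s then ((2:ℂ) ^ Fintype.card ↥F) else 0)
                * (R (Us ↑s) : ∀ _ : S, ℂ) t := by
              exact Finset.sum_congr rfl fun s _ => by rw [sgn_orth]
          _ = (2:ℂ) ^ F.card * a t := by
              simp only [ite_mul, zero_mul]
              rw [Finset.sum_ite_eq]
              simp only [Finset.mem_univ, if_pos, Fintype.card_coe]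
              rfl
      · simp only [if_neg ht, Finset.sum_const_zero, mul_zero]
    -- conclude the norm estimate
    have hcard : (Fintype.card (↥F → Bool) : ℝ) = 2 ^ F.card := by
      rw [Fintype.card_fun, Fintype.card_bool, Fintype.card_coe]
      push_cast; ring
    have haFnorm : ‖aF‖ ≤ C := by
      have h1 : ‖∑ ε : ↥F → Bool, X ε‖ ≤ (2:ℝ) ^ F.card * C := by
        calc ‖∑ ε : ↥F → Bool, X ε‖ ≤ ∑ ε : ↥F → Bool, ‖X ε‖ := norm_sum_le _ _
          _ ≤ ∑ _ε : ↥F → Bool, C := Finset.sum_le_sum fun ε _ => hXnorm ε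
          _ = (2:ℝ) ^ F.card * C := by
              rw [Finset.sum_const, Finset.card_univ, nsmul_eq_mul, hcard]
      rw [hsum, norm_smul] at h1
      have h2 : ‖(2:ℂ) ^ F.card‖ = (2:ℝ) ^ F.card := by
        rw [norm_pow, Complex.norm_ofNat]
      rw [h2] at h1
      have hpos : (0:ℝ) < 2 ^ F.card := by positivity
      exact le_of_mul_le_mul_left h1 hpos
    have haFnorm_p : ∑ s ∈ F, ‖a s‖ ^ q.toReal ≤ C ^ q.toReal := by
      rw [← lp.norm_sum_single hqt0 a F]
      exact Real.rpow_le_rpow (norm_nonneg _) haFnorm hqt0.le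
    rwa [hqt] at haFnorm_p
  -- pass to the tsum in ℝ≥0∞
  have hmain : ∑' s : S, (‖a s‖₊ : ℝ≥0∞) ^ p ≤ (ENNReal.ofReal C) ^ p := by
    rw [ENNReal.tsum_eq_iSup_sum]
    refine iSup_le fun F => ?_
    have heq : ∑ s ∈ F, (‖a s‖₊ : ℝ≥0∞) ^ p = ENNReal.ofReal (∑ s ∈ F, ‖a s‖ ^ p) := by
      rw [ENNReal.ofReal_sum_of_nonneg (fun s _ => by positivity)]
      refine Finset.sum_congr rfl fun s _ => ?_
      rw [← ENNReal.ofReal_rpow_of_nonneg (norm_nonneg _) hp0.le]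
      exact congrArg (· ^ p) (ENNReal.ofReal_eq_coe_nnreal (norm_nonneg _)).symm
    rw [heq, ENNReal.ofReal_rpow_of_nonneg hC0 hp0.le]
    exact ENNReal.ofReal_le_ofReal (key F)
  calc (∑' s : S, (‖a s‖₊ : ℝ≥0∞) ^ p) ^ (1 / p)
      ≤ ((ENNReal.ofReal C) ^ p) ^ (1 / p) :=
        ENNReal.rpow_le_rpow hmain (by positivity)
    _ = ENNReal.ofReal C := by
        rw [← ENNReal.rpow_mul, mul_one_div_cancel hp0.ne', ENNReal.rpow_one]
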